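/- Let p₁, p₂ be positive integers, and let Σ = [[A₁₁, A₁₂], [A₁₂ᵀ, A₂₂]] be a symmetric positive definite (p₁+p₂)×(p₁+p₂) real matrix with blocks A₁₁ (p₁×p₁), A₁₂ (p₁×p₂), A₂₂ (p₂×p₂). Then for every u₁ ∈ ℝ^{p₁} and u₂ ∈ ℝ^{p₂}, writing u = (u₁, u₂), one has uᵀ Σ⁻¹ u ≥ u₁ᵀ A₁₁⁻¹ u₁. (In particular, A₁₁ is itself positive definite, hence invertible.) -/

import Mathlib

open Matrix

/-- If `Σ = [[A₁₁, A₁₂], [A₁₂ᵀ, A₂₂]]` is symmetric positive definite, then for every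
`u = (u₁, u₂)` the distance of separation `uᵀ Σ⁻¹ u` is at least `u₁ᵀ A₁₁⁻¹ u₁`
(in particular, the block `A₁₁` is itself positive definite). -/
theorem stmt_8 (p₁ p₂ : ℕ) (hp₁ : 0 < p₁) (hp₂ : 0 < p₂)
    (A₁₁ : Matrix (Fin p₁) (Fin p₁) ℝ) (A₁₂ : Matrix (Fin p₁) (Fin p₂) ℝ)
    (A₂₂ : Matrix (Fin p₂) (Fin p₂) ℝ)
    (hSig : (Matrix.fromBlocks A₁₁ A₁₂ A₁₂ᵀ A₂₂).PosDef) :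
    A₁₁.PosDef ∧
      ∀ (u₁ : Fin p₁ → ℝ) (u₂ : Fin p₂ → ℝ),
        dotProduct u₁ (A₁₁⁻¹.mulVec u₁) ≤
          dotProduct (Sum.elim u₁ u₂)
            ((Matrix.fromBlocks A₁₁ A₁₂ A₁₂ᵀ A₂₂)⁻¹.mulVec (Sum.elim u₁ u₂)) := by
  set S : Matrix (Fin p₁ ⊕ Fin p₂) (Fin p₁ ⊕ Fin p₂) ℝ := Matrix.fromBlocks A₁₁ A₁₂ A₁₂ᵀ A₂₂
    with hS
  have hA₁₁herm : A₁₁.IsHermitian := by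
    have h := hSig.isHermitian
    have h11 := congrArg Matrix.toBlocks₁₁ h
    simpa [hS, Matrix.IsHermitian, Matrix.fromBlocks_conjTranspose, Matrix.fromBlocks_transpose] using h11
  have hA₁₁ : A₁₁.PosDef := by
    refine Matrix.PosDef.of_dotProduct_mulVec_pos hA₁₁herm (fun x hx => ?_)
    have hx' : (Sum.elim x 0 : Fin p₁ ⊕ Fin p₂ → ℝ) ≠ 0 := by
      intro h
      apply hx
      funext i
      have := congrFun h (Sum.inl i)
      simpa using this
    have := hSig.dotProduct_mulVec_pos hx'
    simpa [hS, Matrix.fromBlocks_mulVec, Matrix.dotProduct_block] using this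
  refine ⟨hA₁₁, fun u₁ u₂ => ?_⟩
  have hSdet : S.det ≠ 0 := hSig.det_pos.ne'
  have hAdet : A₁₁.det ≠ 0 := hA₁₁.det_pos.ne'
  set u : Fin p₁ ⊕ Fin p₂ → ℝ := Sum.elim u₁ u₂ with hu
  set v : Fin p₁ ⊕ Fin p₂ → ℝ := S⁻¹ *ᵥ u with hv
  set y : Fin p₁ → ℝ := A₁₁⁻¹ *ᵥ u₁ with hy
  set w : Fin p₁ ⊕ Fin p₂ → ℝ := Sum.elim y 0 with hw
  have hSv : S *ᵥ v = u := by
    rw [hv, Matrix.mulVec_mulVec, Matrix.mul_nonsing_inv _ hSdet.isUnit, Matrix.one_mulVec]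
  have hAy : A₁₁ *ᵥ y = u₁ := by
    rw [hy, Matrix.mulVec_mulVec, Matrix.mul_nonsing_inv _ hAdet.isUnit, Matrix.one_mulVec]
  have hSw : S *ᵥ w = Sum.elim u₁ (A₁₂ᵀ *ᵥ y) := by
    rw [hS, hw, Matrix.fromBlocks_mulVec]
    simp [hAy]
  have key : 0 ≤ dotProduct (v - w) (S *ᵥ (v - w)) := by
    simpa using hSig.posSemidef.dotProduct_mulVec_nonneg (v - w)
  have hvSw : dotProduct v (S *ᵥ w) = dotProduct u w := by
    rw [Matrix.dotProduct_mulVec, ← Matrix.mulVec_transpose,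
      show Sᵀ = S from hSig.isHermitian, hSv]
  have hwSw : dotProduct w (S *ᵥ w) = dotProduct u₁ y := by
    rw [hSw, hw, Matrix.dotProduct_block]
    simp [dotProduct_comm]
  have hvSv : dotProduct v (S *ᵥ v) = dotProduct u v := by
    rw [hSv, dotProduct_comm]
  have hwSv : dotProduct w (S *ᵥ v) = dotProduct u₁ y := by
    rw [hSv, hw, hu, Matrix.dotProduct_block]
    simp [dotProduct_comm]
  have huw : dotProduct u w = dotProduct u₁ y := by
    rw [hu, hw, Matrix.dotProduct_block]; simp
  have expand : dotProduct (v - w) (S *ᵥ (v - w))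
      = dotProduct u v - dotProduct u₁ y := by
    rw [Matrix.mulVec_sub, dotProduct_sub, sub_dotProduct,
      sub_dotProduct, hvSv, hwSv, hvSw, hwSw, huw]
    ring
  rw [expand] at key
  have : dotProduct u₁ (A₁₁⁻¹ *ᵥ u₁) = dotProduct u₁ y := by rw [hy]
  linarith
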